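/- For i = 1,…,n−2 let (λ_i,μ_i) ∈ ℂ²∖{(0,0)} and set f^i = λ_i s_i − μ_i t_i. Suppose the ideal I = f^1·A + ⋯ + f^{n−2}·A is a proper ideal of A and let P be a minimal prime ideal of A over I. If P is residually null, then P is not Poisson primitive. -/

import Mathlib

/- STATEMENT 15: With f^i = λ_i s_i − μ_i t_i, I = (f^1,…,f^{n−2}) proper and P a
minimal prime over I: if P is residually null then P is not Poisson primitive. -/

noncomputable section
open MvPolynomial

/-- The polynomial algebra `A = ℂ[x_1,…,x_{m+2}]`. -/
abbrev PA (m : ℕ) : Type := MvPolynomial (Fin (m + 2)) ℂ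

/-- The rational function field `B = ℂ(x_1,…,x_{m+2})`. -/
abbrev FB (m : ℕ) : Type := FractionRing (PA m)

/-- The rows of the matrix computing the Poisson bracket on `A`: ∇f, ∇g and, for
each `i`, `t_i²∇(s_i/t_i) = t_i∇s_i − s_i∇t_i`. -/
def pbrRows {m : ℕ} (s t : Fin m → PA m) (f g : PA m) :
    Fin (m + 2) → Fin (m + 2) → PA m :=
  Fin.cons (fun j => pderiv j f)
    (Fin.cons (fun j => pderiv j g)
      (fun k => fun j => t k * pderiv j (s k) - s k * pderiv j (t k)))

/-- The Poisson bracket `{f,g} = (t_1⋯t_m)²·Jac(f,g,s_1/t_1,…,s_m/t_m)` restricted to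
the polynomial algebra `A`. -/
def pbr {m : ℕ} (s t : Fin m → PA m) (f g : PA m) : PA m :=
  Matrix.det (Matrix.of (pbrRows s t f g))

universe u

section Artinian

/-- A finitely generated module killed by a maximal ideal is Artinian. -/
theorem isArtinian_of_killed_by_maximal {R : Type u} [CommRing R] (P : Ideal R)
    (hPmax : P.IsMaximal)
    (M : Type*) [AddCommGroup M] [Module R M] [Module.Finite R M]
    (hkill : ∀ p ∈ P, ∀ x : M, p • x = 0) : IsArtinian R M := by
  have htor : Module.IsTorsionBySet R M (P : Set R) := fun x a => hkill a.1 a.2 x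
  letI : Module (R ⧸ P) M := htor.module
  haveI : IsScalarTower R (R ⧸ P) M := htor.isScalarTower
  haveI : Module.Finite (R ⧸ P) M := Module.Finite.of_restrictScalars_finite R (R ⧸ P) M
  letI : Field (R ⧸ P) := Ideal.Quotient.field P
  haveI hart : IsArtinian (R ⧸ P) M := isArtinian_of_fg_of_artinian'
  let F : Submodule R M → Submodule (R ⧸ P) M := fun N =>
    { carrier := N
      add_mem' := fun h1 h2 => N.add_mem h1 h2
      zero_mem' := N.zero_mem
      smul_mem' := by
        intro c x hx
        obtain ⟨b, rfl⟩ := Ideal.Quotient.mk_surjective c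
        rw [htor.mk_smul]
        exact N.smul_mem b hx }
  have hFle : ∀ N N' : Submodule R M, F N ≤ F N' ↔ N ≤ N' := by
    intro N N'
    constructor
    · intro h x hx; exact h hx
    · intro h x hx; exact h hx
  let e : Submodule R M ↪o Submodule (R ⧸ P) M :=
    { toFun := F
      inj' := by
        intro N N' h
        exact le_antisymm ((hFle N N').1 h.le) ((hFle N' N).1 h.ge)
      map_rel_iff' := by intro N N'; exact hFle N N' }
  exact ⟨e.wellFounded hart.wf⟩

theorem isArtinian_module_of_maximal_pow_smul {R : Type u} [CommRing R] [IsNoetherianRing R]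
    (P : Ideal R) (hPmax : P.IsMaximal) :
    ∀ (t : ℕ) (M : Type u) [AddCommGroup M] [Module R M], Module.Finite R M →
      (P ^ t • (⊤ : Submodule R M) = ⊥) → IsArtinian R M := by
  intro t
  induction t with
  | zero =>
    intro M _ _ _ h
    rw [pow_zero, Ideal.one_eq_top, Submodule.top_smul] at h
    haveI : Subsingleton M := by
      constructor
      intro a b
      have ha : a ∈ (⊥ : Submodule R M) := h ▸ Submodule.mem_top
      have hb : b ∈ (⊥ : Submodule R M) := h ▸ Submodule.mem_top
      rw [Submodule.mem_bot] at ha hb; rw [ha, hb]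
    haveI : Finite M := Finite.of_subsingleton
    exact isArtinian_of_finite
  | succ t ih =>
    intro M _ _ hfin h
    haveI : IsNoetherian R M := inferInstance
    set N : Submodule R M := P ^ t • ⊤ with hN
    have hPNbot : P • N = ⊥ := by
      rw [hN, ← Submodule.smul_assoc, smul_eq_mul, ← pow_succ']
      exact h
    have h1 : IsArtinian R N := by
      haveI : Module.Finite R N := Module.Finite.iff_fg.mpr (IsNoetherian.noetherian N)
      apply isArtinian_of_killed_by_maximal P hPmax
      intro p hp x
      have hx : p • (x : M) ∈ P • N := Submodule.smul_mem_smul hp x.2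
      rw [hPNbot, Submodule.mem_bot] at hx
      ext
      simpa using hx
    have h2 : IsArtinian R (M ⧸ N) := by
      apply ih
      · infer_instance
      · have : (⊤ : Submodule R (M ⧸ N)) = Submodule.map N.mkQ ⊤ := by
          rw [Submodule.map_top, Submodule.range_mkQ]
        rw [this, ← Submodule.map_smul'', ← hN]
        rw [eq_bot_iff]
        intro x hx
        obtain ⟨y, hy, rfl⟩ := hx
        simpa using (Submodule.Quotient.mk_eq_zero N).mpr hy
    exact (isArtinian_iff_submodule_quotient N).mpr ⟨h1, h2⟩

theorem isArtinianRing_of_maximal_pow_eq_bot {R : Type u} [CommRing R] [IsNoetherianRing R]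
    (P : Ideal R) (hPmax : P.IsMaximal) (t : ℕ) (h : P ^ t = ⊥) : IsArtinianRing R := by
  apply isArtinian_module_of_maximal_pow_smul P hPmax t R inferInstance
  rw [smul_eq_mul, Ideal.mul_top]
  exact h

end Artinian


section SymPow

variable {R : Type u} [CommRing R]

/-- The `k`-th symbolic power of a prime ideal `Q`. -/
def symPow (Q : Ideal R) (hQ : Q.IsPrime) (k : ℕ) : Ideal R where
  carrier := {x | ∃ s, s ∉ Q ∧ s * x ∈ Q ^ k}
  zero_mem' := ⟨1, fun h => hQ.ne_top (Ideal.eq_top_iff_one Q |>.mpr h), by simp⟩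
  add_mem' := by
    rintro x y ⟨s, hs, hsx⟩ ⟨t, ht, hty⟩
    refine ⟨s * t, fun h => ((hQ.mem_or_mem h).elim hs ht), ?_⟩
    have : s * t * (x + y) = t * (s * x) + s * (t * y) := by ring
    rw [this]
    exact Ideal.add_mem _ (Ideal.mul_mem_left _ _ hsx) (Ideal.mul_mem_left _ _ hty)
  smul_mem' := by
    rintro c x ⟨s, hs, h⟩
    refine ⟨s, hs, ?_⟩
    have : s * (c • x) = c * (s * x) := by simp [smul_eq_mul]; ring
    rw [this]
    exact Ideal.mul_mem_left _ _ h

theorem pow_le_symPow {Q : Ideal R} (hQ : Q.IsPrime) (k : ℕ) : Q ^ k ≤ symPow Q hQ k :=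
  fun x hx => ⟨1, fun h => hQ.ne_top (Ideal.eq_top_iff_one Q |>.mpr h), by simpa using hx⟩

theorem symPow_antitone {Q : Ideal R} (hQ : Q.IsPrime) {k l : ℕ} (h : k ≤ l) :
    symPow Q hQ l ≤ symPow Q hQ k := by
  rintro x ⟨s, hs, hsx⟩
  exact ⟨s, hs, Ideal.pow_le_pow_right h hsx⟩

theorem mul_mem_symPow {Q : Ideal R} (hQ : Q.IsPrime) {k : ℕ} {a x : R} (ha : a ∉ Q)
    (h : a * x ∈ symPow Q hQ k) : x ∈ symPow Q hQ k := by
  obtain ⟨s, hs, hsx⟩ := h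
  refine ⟨s * a, fun hmem => ((hQ.mem_or_mem hmem).elim hs ha), ?_⟩
  have : s * a * x = s * (a * x) := by ring
  rw [this]; exact hsx

end SymPow

section PITLocal

theorem pit_local {R : Type u} [CommRing R] [IsNoetherianRing R] (P : Ideal R)
    (hPmax : P.IsMaximal) (hlocal : ∀ Q : Ideal R, Q.IsPrime → Q ≤ P) (a : R)
    (hmin : P ∈ (Ideal.span {a}).minimalPrimes)
    (Q : Ideal R) (hQ : Q.IsPrime) (hQP : Q < P)
    (Q' : Ideal R) (hQ' : Q'.IsPrime) (hQ'Q : Q' < Q) : False := by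
  classical
  -- a is not in Q
  have haQ : a ∉ Q := by
    intro haQ
    have : P ≤ Q := hmin.2 ⟨hQ, (Ideal.span_singleton_le_iff_mem Q).mpr haQ⟩ hQP.le
    exact hQP.ne' (le_antisymm this hQP.le)
  have haP : a ∈ P := hmin.1.2 (Ideal.subset_span rfl)
  -- jacobson radical is P
  have hmax_eq : ∀ J : Ideal R, J.IsMaximal → J = P :=
    fun J hJ => hJ.eq_of_le hPmax.ne_top (hlocal J hJ.isPrime)
  have hjac : P ≤ Ideal.jacobson ⊥ := by
    rw [Ideal.jacobson]
    apply le_sInf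
    rintro J ⟨-, hJmax⟩
    rw [hmax_eq J hJmax]
  -- quotient ring by (a)
  set I : Ideal R := Ideal.span {a} with hIdef
  let R' := R ⧸ I
  let mk : R →+* R' := Ideal.Quotient.mk I
  have hmksurj : Function.Surjective mk := Ideal.Quotient.mk_surjective
  have hker : RingHom.ker mk = I := Ideal.mk_ker
  set P' : Ideal R' := P.map mk with hP'def
  have hkerP : RingHom.ker mk ≤ P := by rw [hker]; exact hmin.1.2
  haveI : P.IsPrime := hPmax.isPrime
  have hP'prime : P'.IsPrime := Ideal.map_isPrime_of_surjective hmksurj hkerP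
  -- every prime of R' contains P'
  have hP'le : ∀ D : Ideal R', D.IsPrime → P' ≤ D := by
    intro D hD
    have hDc : (D.comap mk).IsPrime := hD.comap mk
    have hIDc : I ≤ D.comap mk := fun x hx => Ideal.mem_comap.mpr (by
      rw [show mk x = 0 from Ideal.Quotient.eq_zero_iff_mem.mpr hx]; exact D.zero_mem)
    have h1 : D.comap mk ≤ P := hlocal _ hDc
    have h2 : P ≤ D.comap mk := hmin.2 ⟨hDc, hIDc⟩ h1
    calc P' = Ideal.map mk P := rfl
    _ ≤ Ideal.map mk (D.comap mk) := Ideal.map_mono h2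
    _ = D := Ideal.map_comap_of_surjective mk hmksurj D
  -- P' is nilpotent
  have hP'nil : P' ≤ nilradical R' := by
    rw [nilradical_eq_sInf]
    exact le_sInf fun D hD => hP'le D hD
  obtain ⟨t, ht⟩ := IsNoetherianRing.isNilpotent_nilradical R'
  have hP't : P' ^ t = ⊥ := by
    apply le_bot_iff.mp
    calc P' ^ t ≤ (nilradical R') ^ t := Ideal.pow_right_mono hP'nil t
    _ = ⊥ := by rw [ht]; rfl
  have hbot : Ideal.comap mk ⊥ = I := by
    rw [← RingHom.ker_eq_comap_bot]; exact hker
  have hcomapP' : P'.comap mk = P := by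
    rw [hP'def, Ideal.comap_map_of_surjective mk hmksurj, hbot]
    exact sup_eq_left.mpr hmin.1.2
  have hP'max : P'.IsMaximal := by
    constructor
    constructor
    · intro htop
      apply hPmax.ne_top
      rw [← hcomapP', htop, Ideal.comap_top]
    · intro J hJ
      have h1 : P ≤ J.comap mk := by rw [← hcomapP']; exact Ideal.comap_mono hJ.le
      have h2 : P ≠ J.comap mk := by
        intro he
        apply hJ.ne
        rw [hP'def, he, Ideal.map_comap_of_surjective mk hmksurj]
      have : J.comap mk = ⊤ := hPmax.1.2 _ (lt_of_le_of_ne h1 h2)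
      rw [← Ideal.map_comap_of_surjective mk hmksurj J, this, Ideal.map_top]
  -- R' is Artinian
  haveI hart : IsArtinianRing R' := isArtinianRing_of_maximal_pow_eq_bot P' hP'max t hP't
  -- the descending chain of images of symbolic powers stabilizes
  have hanti : ∀ k l : ℕ, k ≤ l → (symPow Q hQ l).map mk ≤ (symPow Q hQ k).map mk :=
    fun k l h => Ideal.map_mono (symPow_antitone hQ h)
  let f : ℕ →o (Submodule R' R')ᵒᵈ :=
    ⟨fun k => OrderDual.toDual ((symPow Q hQ k).map mk), fun k l h => hanti k l h⟩
  obtain ⟨n, hn⟩ := IsArtinian.monotone_stabilizes f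
  -- hence symbolic powers themselves stabilize
  have hstab : symPow Q hQ n = symPow Q hQ (n + 1) := by
    have hmapeq : (symPow Q hQ n).map mk = (symPow Q hQ (n + 1)).map mk :=
      congrArg OrderDual.ofDual (hn (n + 1) (Nat.le_succ n))
    have hcomap : symPow Q hQ n ⊔ I = symPow Q hQ (n + 1) ⊔ I := by
      have h1 := congrArg (Ideal.comap mk) hmapeq
      rwa [Ideal.comap_map_of_surjective mk hmksurj, Ideal.comap_map_of_surjective mk hmksurj,
        hbot] at h1
    -- symPow n ≤ symPow (n+1) ⊔ (a) • symPow n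
    have hstep : symPow Q hQ n ≤ symPow Q hQ (n + 1) ⊔ I • (symPow Q hQ n : Ideal R) := by
      intro x hx
      have hx2 : x ∈ symPow Q hQ (n + 1) ⊔ I := by
        rw [← hcomap]; exact Ideal.mem_sup_left hx
      obtain ⟨y, hy, z, hz, rfl⟩ := Submodule.mem_sup.mp hx2
      obtain ⟨r, rfl⟩ := Ideal.mem_span_singleton'.mp hz
      have hra : r * a ∈ symPow Q hQ n := by
        have : r * a = y + r * a - y := by ring
        rw [this]
        exact Ideal.sub_mem _ hx (symPow_antitone hQ (Nat.le_succ n) hy)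
      have hr : r ∈ symPow Q hQ n := by
        apply mul_mem_symPow hQ haQ
        have : a * r = r * a := by ring
        rw [this]; exact hra
      apply Submodule.add_mem
      · exact Ideal.mem_sup_left hy
      · apply Ideal.mem_sup_right
        rw [smul_eq_mul]
        have : r * a = a * r := by ring
        rw [this]
        exact Ideal.mul_mem_mul (Ideal.subset_span rfl) hr
    have hIjac : I ≤ Ideal.jacobson ⊥ :=
      le_trans ((Ideal.span_singleton_le_iff_mem P).mpr haP) hjac
    have hsup := Submodule.sup_eq_sup_smul_of_le_smul_of_le_jacobson
      (IsNoetherian.noetherian (symPow Q hQ n)) hIjac hstep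
    rw [Submodule.bot_smul, sup_bot_eq] at hsup
    exact le_antisymm (by rw [← hsup]; exact le_sup_right) (symPow_antitone hQ (Nat.le_succ n))
  -- localize at Q and apply Nakayama
  let S := Localization.AtPrime Q
  haveI : IsNoetherianRing S := IsLocalization.isNoetherianRing Q.primeCompl S ‹IsNoetherianRing R›
  set QS : Ideal S := Q.map (algebraMap R S) with hQSdef
  have hQSmax : QS = IsLocalRing.maximalIdeal S := Localization.AtPrime.map_eq_maximalIdeal
  have hmaple : Ideal.map (algebraMap R S) (Q ^ n) ≤ Ideal.map (algebraMap R S) (Q ^ (n + 1)) := by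
    rw [Ideal.map_le_iff_le_comap]
    intro x hx
    have hx1 : x ∈ symPow Q hQ (n + 1) := hstab ▸ pow_le_symPow hQ n hx
    obtain ⟨s, hs, hsx⟩ := hx1
    rw [Ideal.mem_comap]
    have hu : IsUnit (algebraMap R S s) := IsLocalization.map_units S (⟨s, hs⟩ : Q.primeCompl)
    have : algebraMap R S s * algebraMap R S x ∈ Ideal.map (algebraMap R S) (Q ^ (n + 1)) := by
      rw [← map_mul]
      exact Ideal.mem_map_of_mem _ hsx
    exact (Ideal.unit_mul_mem_iff_mem _ hu).mp this
  have hQSpow : QS ^ n = ⊥ := by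
    apply Submodule.eq_bot_of_le_smul_of_le_jacobson_bot QS (QS ^ n)
      (IsNoetherian.noetherian (QS ^ n))
    · calc QS ^ n = Ideal.map (algebraMap R S) (Q ^ n) := by rw [Ideal.map_pow]
      _ ≤ Ideal.map (algebraMap R S) (Q ^ (n + 1)) := hmaple
      _ = QS ^ (n + 1) := by rw [Ideal.map_pow]
      _ = QS • QS ^ n := by rw [pow_succ']; rfl
    · rw [hQSmax, IsLocalRing.jacobson_eq_maximalIdeal ⊥ bot_ne_top]
  -- get a contradiction
  obtain ⟨b, hbQ, hbQ'⟩ := SetLike.exists_of_lt hQ'Q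
  have hbn : algebraMap R S (b ^ n) ∈ QS ^ n := by
    rw [hQSdef, ← Ideal.map_pow]
    exact Ideal.mem_map_of_mem _ (Ideal.pow_mem_pow hbQ n)
  rw [hQSpow, Ideal.mem_bot] at hbn
  obtain ⟨s, hs⟩ := (IsLocalization.map_eq_zero_iff Q.primeCompl S (b ^ n)).mp hbn
  have h0 : (s : R) * b ^ n ∈ Q' := by rw [hs]; exact Q'.zero_mem
  rcases hQ'.mem_or_mem h0 with h | h
  · exact s.2 (hQ'Q.le h)
  · exact hbQ' (hQ'.mem_of_pow_mem n h)

end PITLocal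

section PITGlobal

/-- Krull's principal ideal theorem (chain form): if `P` is a minimal prime over a
principal ideal, there is no chain of two primes strictly below `P`. -/
theorem pit_global {R : Type u} [CommRing R] [IsNoetherianRing R] (a : R) (P : Ideal R)
    (hmin : P ∈ (Ideal.span {a}).minimalPrimes)
    (Q Q' : Ideal R) (hQ : Q.IsPrime) (hQ' : Q'.IsPrime)
    (h1 : Q' < Q) (h2 : Q < P) : False := by
  haveI hPprime : P.IsPrime := hmin.1.1
  let S := Localization.AtPrime P
  haveI : IsNoetherianRing S := IsLocalization.isNoetherianRing P.primeCompl S ‹IsNoetherianRing R›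
  have hdisj : ∀ D : Ideal R, D ≤ P → Disjoint (P.primeCompl : Set R) (D : Set R) := by
    intro D hDP
    rw [Set.disjoint_left]
    intro x hx hxD
    exact hx (hDP hxD)
  -- comap of any prime of S is contained in P
  have hcomap_le : ∀ D : Ideal S, D.IsPrime → D.comap (algebraMap R S) ≤ P := by
    intro D hD x hx
    by_contra hxP
    have hu : IsUnit (algebraMap R S x) := IsLocalization.map_units S (⟨x, hxP⟩ : P.primeCompl)
    exact hD.ne_top (D.eq_top_of_isUnit_mem hx hu)
  have hPS : Ideal.map (algebraMap R S) P = IsLocalRing.maximalIdeal S :=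
    Localization.AtPrime.map_eq_maximalIdeal
  have hmax : (IsLocalRing.maximalIdeal S).IsMaximal := IsLocalRing.maximalIdeal.isMaximal S
  -- all primes of S are below the maximal ideal
  have hlocal : ∀ D : Ideal S, D.IsPrime → D ≤ IsLocalRing.maximalIdeal S := by
    intro D hD
    have : D = Ideal.map (algebraMap R S) (D.comap (algebraMap R S)) :=
      (IsLocalization.map_comap P.primeCompl S D).symm
    rw [this, ← hPS]
    exact Ideal.map_mono (hcomap_le D hD)
  -- the maximal ideal is minimal over the image of (a)
  have haP : a ∈ P := hmin.1.2 (Ideal.subset_span rfl)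
  have hminS : IsLocalRing.maximalIdeal S ∈
      (Ideal.span {algebraMap R S a}).minimalPrimes := by
    constructor
    · refine ⟨hmax.isPrime, ?_⟩
      rw [Ideal.span_singleton_le_iff_mem, ← hPS]
      exact Ideal.mem_map_of_mem _ haP
    · rintro D ⟨hDprime, hDa⟩ hDle
      have hacomap : a ∈ D.comap (algebraMap R S) :=
        Ideal.mem_comap.mpr (hDa (Ideal.subset_span rfl))
      have hPle : P ≤ D.comap (algebraMap R S) :=
        hmin.2 ⟨hDprime.comap _, (Ideal.span_singleton_le_iff_mem _).mpr hacomap⟩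
          (hcomap_le D hDprime)
      rw [← hPS]
      calc Ideal.map (algebraMap R S) P ≤
          Ideal.map (algebraMap R S) (D.comap (algebraMap R S)) := Ideal.map_mono hPle
      _ = D := IsLocalization.map_comap P.primeCompl S D
  -- transfer the chain
  have hQSprime : (Q.map (algebraMap R S)).IsPrime :=
    IsLocalization.isPrime_of_isPrime_disjoint P.primeCompl S Q hQ (hdisj Q h2.le)
  have hQ'Sprime : (Q'.map (algebraMap R S)).IsPrime :=
    IsLocalization.isPrime_of_isPrime_disjoint P.primeCompl S Q' hQ'
      (hdisj Q' (h1.le.trans h2.le))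
  have hcomapQ : (Q.map (algebraMap R S)).comap (algebraMap R S) = Q :=
    IsLocalization.comap_map_of_isPrime_disjoint P.primeCompl S hQ (hdisj Q h2.le)
  have hcomapQ' : (Q'.map (algebraMap R S)).comap (algebraMap R S) = Q' :=
    IsLocalization.comap_map_of_isPrime_disjoint P.primeCompl S hQ'
      (hdisj Q' (h1.le.trans h2.le))
  have hchain1 : Q'.map (algebraMap R S) < Q.map (algebraMap R S) := by
    refine lt_of_le_of_ne (Ideal.map_mono h1.le) ?_
    intro he
    exact h1.ne (by rw [← hcomapQ', he, hcomapQ])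
  have hchain2 : Q.map (algebraMap R S) < IsLocalRing.maximalIdeal S := by
    refine lt_of_le_of_ne (hlocal _ hQSprime) ?_
    intro he
    apply h2.ne
    rw [← hcomapQ, he]; exact Localization.AtPrime.comap_maximalIdeal
  exact pit_local (IsLocalRing.maximalIdeal S) hmax hlocal (algebraMap R S a) hminS
    (Q.map (algebraMap R S)) hQSprime hchain2
    (Q'.map (algebraMap R S)) hQ'Sprime hchain1

/-- Minimal primes map to minimal primes under surjections whose kernel is below `P`. -/
theorem mem_minimalPrimes_map {R : Type u} {S : Type*} [CommRing R] [CommRing S]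
    (f : R →+* S) (hf : Function.Surjective f) (I P : Ideal R)
    (hP : P ∈ I.minimalPrimes) (hker : RingHom.ker f ≤ P) :
    P.map f ∈ (I.map f).minimalPrimes := by
  haveI : P.IsPrime := hP.1.1
  have hPmap : (P.map f).IsPrime := Ideal.map_isPrime_of_surjective hf hker
  constructor
  · exact ⟨hPmap, Ideal.map_mono hP.1.2⟩
  · rintro D ⟨hDprime, hDI⟩ hDle
    have h1 : I ≤ D.comap f := le_trans (Ideal.map_le_iff_le_comap.mp (le_refl (I.map f))) (Ideal.comap_mono hDI)
    have h2 : D.comap f ≤ P := by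
      have := Ideal.comap_mono (f := f) hDle
      rwa [Ideal.comap_map_of_surjective f hf P,
        sup_eq_left.mpr (le_trans (le_of_eq (RingHom.ker_eq_comap_bot f).symm) hker)] at this
    have h3 : P ≤ D.comap f := hP.2 ⟨hDprime.comap f, h1⟩ h2
    calc P.map f ≤ (D.comap f).map f := Ideal.map_mono h3
    _ = D := Ideal.map_comap_of_surjective f hf D
end PITGlobal

section Krull

theorem chain_mono {R : Type u} [CommRing R] {c : ℕ → Ideal R} {r : ℕ}
    (hstrict : ∀ i, i < r → c i < c (i + 1)) :
    ∀ i j, i ≤ j → j ≤ r → c i ≤ c j := by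
  intro i j hij hjr
  induction j, hij using Nat.le_induction with
  | base => exact le_rfl
  | succ j hij ih =>
    exact le_trans (ih (by omega)) (hstrict j (by omega)).le

theorem chain_modify {R : Type u} [CommRing R] [IsNoetherianRing R] (x : R) (r : ℕ) :
    ∀ j : ℕ, j < r → ∀ c : ℕ → Ideal R,
      (∀ i, i ≤ r → (c i).IsPrime) → (∀ i, i < r → c i < c (i + 1)) →
      (∀ i, i ≤ r → j < i → x ∈ c i) →
      ∃ d : ℕ → Ideal R, (∀ i, i ≤ r → (d i).IsPrime) ∧ (∀ i, i < r → d i < d (i + 1)) ∧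
        d 0 = c 0 ∧ d r = c r ∧ x ∈ d 1 := by
  intro j
  induction j with
  | zero =>
    intro h0r c hp hs hx
    exact ⟨c, hp, hs, rfl, rfl, hx 1 (by omega) (by omega)⟩
  | succ j ih =>
    intro hjr c hp hs hx
    by_cases hxc : x ∈ c (j + 1)
    · apply ih (by omega) c hp hs
      intro i hir hji
      by_cases h : i = j + 1
      · rw [h]; exact hxc
      · exact hx i hir (by omega)
    · -- x ∉ c (j+1), and j + 1 < r
      have hxcj : x ∉ c j := fun hh =>
        hxc (chain_mono hs j (j + 1) (by omega) (by omega) hh)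
      have hxj2 : x ∈ c (j + 2) := hx (j + 2) (by omega) (by omega)
      have h1 : c j ⊔ Ideal.span {x} ≤ c (j + 2) :=
        sup_le (chain_mono hs j (j + 2) (by omega) (by omega))
          ((Ideal.span_singleton_le_iff_mem _).mpr hxj2)
      haveI : (c (j + 2)).IsPrime := hp (j + 2) (by omega)
      obtain ⟨D, hD, hDle⟩ := Ideal.exists_minimalPrimes_le h1
      have hxD : x ∈ D := hD.1.2 (Ideal.mem_sup_right (Ideal.subset_span rfl))
      have hcjD : c j < D :=
        lt_of_le_of_ne (le_trans le_sup_left hD.1.2) (fun he => hxcj (he ▸ hxD))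
      have hDne : D ≠ c (j + 2) := by
        intro he
        haveI hcjprime : (c j).IsPrime := hp j (by omega)
        set mk : R →+* R ⧸ c j := Ideal.Quotient.mk (c j) with hmk
        have hsurj : Function.Surjective mk := Ideal.Quotient.mk_surjective
        have hkermk : RingHom.ker mk = c j := Ideal.mk_ker
        have hker_le : RingHom.ker mk ≤ c (j + 2) := by
          rw [hkermk]; exact chain_mono hs j (j + 2) (by omega) (by omega)
        have hmapmin : ((c (j + 2)).map mk) ∈
            (((c j ⊔ Ideal.span {x})).map mk).minimalPrimes :=
          mem_minimalPrimes_map mk hsurj _ _ (he ▸ hD) hker_le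
        have hmapspan : (c j ⊔ Ideal.span {x}).map mk = Ideal.span {mk x} := by
          rw [Ideal.map_sup, Ideal.map_quotient_self, Ideal.map_span, Set.image_singleton,
            bot_sup_eq]
        rw [hmapspan] at hmapmin
        haveI : (c (j + 1)).IsPrime := hp (j + 1) (by omega)
        have hker_le1 : RingHom.ker mk ≤ c (j + 1) := by
          rw [hkermk]; exact (hs j (by omega)).le
        have hp1 : ((c (j + 1)).map mk).IsPrime :=
          Ideal.map_isPrime_of_surjective hsurj hker_le1
        have hbotprime : (⊥ : Ideal (R ⧸ c j)).IsPrime := Ideal.bot_prime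
        have hcm1 : ((c (j + 1)).map mk).comap mk = c (j + 1) := by
          rw [Ideal.comap_map_of_surjective mk hsurj, ← RingHom.ker_eq_comap_bot, hkermk]
          exact sup_eq_left.mpr (hs j (by omega)).le
        have hcm2 : ((c (j + 2)).map mk).comap mk = c (j + 2) := by
          rw [Ideal.comap_map_of_surjective mk hsurj, ← RingHom.ker_eq_comap_bot, hkermk]
          exact sup_eq_left.mpr (chain_mono hs j (j + 2) (by omega) (by omega))
        have hlt1 : (⊥ : Ideal (R ⧸ c j)) < (c (j + 1)).map mk := by
          refine lt_of_le_of_ne bot_le ?_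
          intro he1
          have h2 := congrArg (Ideal.comap mk) he1
          rw [hcm1, ← RingHom.ker_eq_comap_bot, hkermk] at h2
          exact (hs j (by omega)).ne h2
        have hlt2 : (c (j + 1)).map mk < (c (j + 2)).map mk := by
          refine lt_of_le_of_ne (Ideal.map_mono (hs (j + 1) (by omega)).le) ?_
          intro he2
          have h2 := congrArg (Ideal.comap mk) he2
          rw [hcm1, hcm2] at h2
          exact (hs (j + 1) (by omega)).ne h2
        exact pit_global (mk x) ((c (j + 2)).map mk) hmapmin
          ((c (j + 1)).map mk) ⊥ hp1 hbotprime hlt1 hlt2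
      have hDlt : D < c (j + 2) := lt_of_le_of_ne hDle hDne
      classical
      set c' : ℕ → Ideal R := Function.update c (j + 1) D with hc'
      have hc'at : c' (j + 1) = D := Function.update_self _ _ _
      have hc'ne : ∀ i, i ≠ j + 1 → c' i = c i := fun i hi => Function.update_of_ne hi _ _
      have hp' : ∀ i, i ≤ r → (c' i).IsPrime := by
        intro i hir
        by_cases hi : i = j + 1
        · rw [hi, hc'at]; exact hD.1.1
        · rw [hc'ne i hi]; exact hp i hir
      have hs' : ∀ i, i < r → c' i < c' (i + 1) := by
        intro i hir
        by_cases hi : i = j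
        · rw [hi, hc'ne j (by omega), show j + 1 = j + 1 from rfl, hc'at]
          exact hcjD
        · by_cases hi1 : i = j + 1
          · rw [hi1, hc'at, hc'ne (j + 1 + 1) (by omega)]
            exact hDlt
          · rw [hc'ne i (by omega), hc'ne (i + 1) (by omega)]
            exact hs i hir
      have hx' : ∀ i, i ≤ r → j < i → x ∈ c' i := by
        intro i hir hji
        by_cases hi : i = j + 1
        · rw [hi, hc'at]; exact hxD
        · rw [hc'ne i hi]; exact hx i hir (by omega)
      obtain ⟨d, hdp, hds, hd0, hdr, hdx⟩ := ih (by omega) c' hp' hs' hx'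
      refine ⟨d, hdp, hds, ?_, ?_, hdx⟩
      · rw [hd0]; exact hc'ne 0 (by omega)
      · rw [hdr]; exact hc'ne r (by omega)

/-- Krull's height theorem, chain form: if `P` is a minimal prime over an ideal generated
by `m` elements, then there is no strictly increasing chain of `m + 2` primes ending at `P`. -/
theorem krull_height_chain :
    ∀ (m : ℕ) {R : Type u} [CommRing R] [IsNoetherianRing R]
      (a : Fin m → R) (P : Ideal R), P ∈ (Ideal.span (Set.range a)).minimalPrimes →
      ∀ c : ℕ → Ideal R, (∀ i, i ≤ m + 1 → (c i).IsPrime) →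
        (∀ i, i < m + 1 → c i < c (i + 1)) → c (m + 1) = P → False := by
  intro m
  induction m with
  | zero =>
    intro R _ _ a P hP c hp hs htop
    rw [Set.range_eq_empty a, Ideal.span_empty] at hP
    have h0 : c 0 < c 1 := hs 0 (by omega)
    have hle : P ≤ c 0 := hP.2 ⟨hp 0 (by omega), bot_le⟩ (htop ▸ h0.le)
    exact lt_irrefl _ (h0.trans_le (htop ▸ hle))
  | succ m ih =>
    intro R _ _ a P hP c hp hs htop
    have hexists : ∃ i, a i ∉ c (m + 1) := by
      by_contra hall
      push_neg at hall
      have hle : Ideal.span (Set.range a) ≤ c (m + 1) := by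
        rw [Ideal.span_le]; rintro y ⟨i, rfl⟩; exact hall i
      have h1 : c (m + 1) < c (m + 2) := hs (m + 1) (by omega)
      have h2 : P ≤ c (m + 1) := hP.2 ⟨hp (m + 1) (by omega), hle⟩ (htop ▸ h1.le)
      exact lt_irrefl _ (h1.trans_le (htop ▸ h2))
    obtain ⟨i0, hi0⟩ := hexists
    have hxP : a i0 ∈ P := hP.1.2 (Ideal.subset_span ⟨i0, rfl⟩)
    obtain ⟨d, hdp, hds, hd0, hdr, hdx⟩ := chain_modify (a i0) (m + 2) (m + 1) (by omega) c hp hs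
      (by intro i hir hji
          have : i = m + 2 := by omega
          rw [this, htop]; exact hxP)
    have hdtop : d (m + 2) = P := by rw [hdr, htop]
    haveI : (d 1).IsPrime := hdp 1 (by omega)
    set mk : R →+* R ⧸ d 1 := Ideal.Quotient.mk (d 1) with hmkdef
    have hsurj : Function.Surjective mk := Ideal.Quotient.mk_surjective
    have hker : RingHom.ker mk = d 1 := Ideal.mk_ker
    have hd1P : d 1 ≤ P := hdtop ▸ chain_mono hds 1 (m + 2) (by omega) (le_refl _)
    have hminmap : (P.map mk) ∈ ((Ideal.span (Set.range a)).map mk).minimalPrimes :=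
      mem_minimalPrimes_map mk hsurj _ _ hP (le_trans (le_of_eq hker) hd1P)
    have hrange : Set.range (⇑mk ∘ a) =
        insert ((⇑mk ∘ a) i0) (Set.range ((⇑mk ∘ a) ∘ i0.succAbove)) := by
      rw [Set.range_comp ((⇑mk ∘ a)) i0.succAbove, Fin.range_succAbove]
      ext y
      constructor
      · rintro ⟨i, rfl⟩
        by_cases hii : i = i0
        · exact Or.inl (by rw [hii])
        · exact Or.inr ⟨i, hii, rfl⟩
      · rintro (h | ⟨i, -, rfl⟩)
        · exact ⟨i0, h.symm⟩
        · exact ⟨i, rfl⟩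
    have hzero : (⇑mk ∘ a) i0 = 0 := Ideal.Quotient.eq_zero_iff_mem.mpr hdx
    have hspan : (Ideal.span (Set.range a)).map mk =
        Ideal.span (Set.range ((⇑mk ∘ a) ∘ i0.succAbove)) := by
      rw [Ideal.map_span, ← Set.range_comp, hrange, hzero]
      exact Submodule.span_insert_zero
    rw [hspan] at hminmap
    set c' : ℕ → Ideal (R ⧸ d 1) := fun i => (d (i + 1)).map mk with hc'def
    have hcomap : ∀ i, 1 ≤ i → i ≤ m + 2 → ((d i).map mk).comap mk = d i := by
      intro i hi1 hi2
      rw [Ideal.comap_map_of_surjective mk hsurj, ← RingHom.ker_eq_comap_bot, hker]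
      exact sup_eq_left.mpr (chain_mono hds 1 i hi1 hi2)
    have hp' : ∀ i, i ≤ m + 1 → (c' i).IsPrime := by
      intro i hi
      haveI : (d (i + 1)).IsPrime := hdp (i + 1) (by omega)
      exact Ideal.map_isPrime_of_surjective hsurj
        (le_trans (le_of_eq hker) (chain_mono hds 1 (i + 1) (by omega) (by omega)))
    have hs' : ∀ i, i < m + 1 → c' i < c' (i + 1) := by
      intro i hi
      refine lt_of_le_of_ne (Ideal.map_mono (hds (i + 1) (by omega)).le) ?_
      intro he
      have h2 := congrArg (Ideal.comap mk) he
      rw [hcomap (i + 1) (by omega) (by omega), hcomap (i + 2) (by omega) (by omega)] at h2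
      exact (hds (i + 1) (by omega)).ne h2
    have htop' : c' (m + 1) = P.map mk := by
      show (d (m + 2)).map mk = P.map mk
      rw [hdtop]
    exact ih ((⇑mk ∘ a) ∘ i0.succAbove) (P.map mk) hminmap c' hp' hs' htop'

end Krull

section Application

open MvPolynomial in
theorem statement_15_aux {n : ℕ} (P : Ideal (MvPolynomial (Fin n) ℂ)) (hPmax : P.IsMaximal)
    (j0 : ℕ) (hj0 : j0 + 1 ≤ n) :
    ∃ c : ℕ → Ideal (MvPolynomial (Fin n) ℂ),
      (∀ i, i ≤ j0 + 1 → (c i).IsPrime) ∧ (∀ i, i < j0 + 1 → c i < c (i + 1)) ∧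
      c (j0 + 1) = P := by
  classical
  obtain ⟨p, hp⟩ := (MvPolynomial.isMaximal_iff_eq_vanishingIdeal_singleton (I := P)).mp hPmax
  set σj : ℕ → Fin n → MvPolynomial (Fin n) ℂ :=
    fun j i => if (i : ℕ) < j then C (p i) else X i with hσj
  set ψ : ℕ → (MvPolynomial (Fin n) ℂ →ₐ[ℂ] MvPolynomial (Fin n) ℂ) :=
    fun j => bind₁ (σj j) with hψ
  -- composition property
  have hcomp : ∀ j j' : ℕ, j ≤ j' → ∀ φ, ψ j' (ψ j φ) = ψ j' φ := by
    intro j j' hjj φ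
    show bind₁ (σj j') (bind₁ (σj j) φ) = bind₁ (σj j') φ
    rw [bind₁_bind₁]
    have hfun : (fun i => bind₁ (σj j') (σj j i)) = σj j' := by
      funext i
      by_cases hi : (i : ℕ) < j
      · simp only [hσj, if_pos hi, if_pos (lt_of_lt_of_le hi hjj), bind₁_C_right]
      · simp only [hσj, if_neg hi, bind₁_X_right]
    rw [hfun]
  -- kernels increase
  have hker_mono : ∀ j j' : ℕ, j ≤ j' → RingHom.ker (ψ j) ≤ RingHom.ker (ψ j') := by
    intro j j' hjj φ hφ
    rw [RingHom.mem_ker] at hφ ⊢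
    rw [← hcomp j j' hjj φ, hφ, map_zero]
  -- kernels are contained in P
  have hker_le : ∀ j : ℕ, RingHom.ker (ψ j) ≤ P := by
    intro j φ hφ
    rw [hp, MvPolynomial.mem_vanishingIdeal_singleton_iff]
    have h1 : aeval p (ψ j φ) = aeval p φ := by
      show aeval p (bind₁ (σj j) φ) = aeval p φ
      rw [aeval_bind₁]
      have hfun : (fun i => aeval p (σj j i)) = p := by
        funext i
        by_cases hi : (i : ℕ) < j
        · simp [hσj, if_pos hi]
        · simp [hσj, if_neg hi]
      rw [hfun]
    rw [RingHom.mem_ker] at hφ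
    have h2 : aeval p φ = 0 := by rw [← h1]; show aeval p ((ψ j) φ) = 0; rw [hφ, map_zero]
    exact h2
  -- the basic nonzero witness
  have hXC : ∀ (i : Fin n) (z : ℂ), X i - C z ≠ (0 : MvPolynomial (Fin n) ℂ) := by
    intro i z h
    have h2 := congrArg (aeval (fun _ => z + 1 : Fin n → ℂ)) h
    simp [sub_eq_zero] at h2
  -- strictness of kernels
  have hker_lt : ∀ j : ℕ, j < n → RingHom.ker (ψ j) < RingHom.ker (ψ (j + 1)) := by
    intro j hj
    refine lt_of_le_of_ne (hker_mono j (j + 1) (Nat.le_succ j)) ?_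
    intro he
    set i1 : Fin n := ⟨j, hj⟩ with hi1
    have hw1 : (X i1 - C (p i1)) ∈ RingHom.ker (ψ (j + 1)) := by
      rw [RingHom.mem_ker]
      show bind₁ (σj (j + 1)) (X i1 - C (p i1)) = 0
      rw [map_sub, bind₁_X_right, bind₁_C_right]
      simp only [hσj]
      rw [if_pos (by simp [hi1])]
      exact sub_self _
    have hw2 : (X i1 - C (p i1)) ∉ RingHom.ker (ψ j) := by
      rw [RingHom.mem_ker]
      show bind₁ (σj j) (X i1 - C (p i1)) ≠ 0
      rw [map_sub, bind₁_X_right, bind₁_C_right]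
      simp only [hσj]
      rw [if_neg (by simp [hi1])]
      exact hXC i1 (p i1)
    exact hw2 (he ▸ hw1)
  -- the seam: ker ψ j0 < P
  have hseam : RingHom.ker (ψ j0) < P := by
    refine lt_of_le_of_ne (hker_le j0) ?_
    intro he
    have hj0n : j0 < n := by omega
    set i1 : Fin n := ⟨j0, hj0n⟩ with hi1
    have hwP : (X i1 - C (p i1)) ∈ P := by
      rw [hp, MvPolynomial.mem_vanishingIdeal_singleton_iff]
      simp
    have hw2 : (X i1 - C (p i1)) ∉ RingHom.ker (ψ j0) := by
      rw [RingHom.mem_ker]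
      show bind₁ (σj j0) (X i1 - C (p i1)) ≠ 0
      rw [map_sub, bind₁_X_right, bind₁_C_right]
      simp only [hσj]
      rw [if_neg (by simp [hi1])]
      exact hXC i1 (p i1)
    rw [← he] at hwP
    exact hw2 hwP
  refine ⟨fun i => if i = j0 + 1 then P else RingHom.ker (ψ i), ?_, ?_, by simp⟩
  · intro i hi
    show (if i = j0 + 1 then P else RingHom.ker (ψ i)).IsPrime
    by_cases h : i = j0 + 1
    · rw [if_pos h]; exact hPmax.isPrime
    · rw [if_neg h]; exact RingHom.ker_isPrime _
  · intro i hi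
    show (if i = j0 + 1 then P else RingHom.ker (ψ i)) <
      (if i + 1 = j0 + 1 then P else RingHom.ker (ψ (i + 1)))
    have hii : i ≠ j0 + 1 := by omega
    rw [if_neg hii]
    by_cases h : i + 1 = j0 + 1
    · rw [if_pos h]
      have hij : i = j0 := by omega
      rw [hij]
      exact hseam
    · rw [if_neg h]
      exact hker_lt i (by omega)

end Application


theorem statement_15 {m : ℕ} (hm : 1 ≤ m)
    (s t : Fin m → PA m)
    (ht : ∀ i, t i ≠ 0)
    (hcop : ∀ i, ∀ d : PA m, d ∣ s i → d ∣ t i → IsUnit d)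
    (hind : AlgebraicIndependent ℂ
      (fun i => algebraMap (PA m) (FB m) (s i) / algebraMap (PA m) (FB m) (t i)))
    (lam mu : Fin m → ℂ) (hlm : ∀ i, (lam i, mu i) ≠ (0, 0))
    (fI : Fin m → PA m) (hfI : ∀ i, fI i = C (lam i) * s i - C (mu i) * t i)
    (I : Ideal (PA m)) (hI : I = Ideal.span (Set.range fI)) (hIproper : I ≠ ⊤)
    (P : Ideal (PA m)) (hP : P ∈ I.minimalPrimes)
    -- P is residually null
    (hrn : ∀ f g : PA m, pbr s t f g ∈ P) :
    -- P is not Poisson primitive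
    ¬ ∃ M : Ideal (PA m), M.IsMaximal ∧ P ≤ M ∧
        ∀ J : Ideal (PA m), (∀ u ∈ J, ∀ r : PA m, pbr s t u r ∈ J) → J ≤ M → J ≤ P := by
  rintro ⟨M, hMmax, hPM, hMmin⟩
  -- M itself is a Poisson ideal (all brackets lie in P ≤ M), so M ≤ P and P is maximal
  have hMP : M ≤ P := hMmin M (fun u _ r => hPM (hrn u r)) le_rfl
  have hPeq : P = M := le_antisymm hPM hMP
  have hPmax : P.IsMaximal := by rw [hPeq]; exact hMmax
  -- build a chain of m + 1 primes strictly below P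
  obtain ⟨c, h1, h2, h3⟩ := statement_15_aux P hPmax m (by omega)
  -- contradiction with Krull's height theorem
  exact krull_height_chain m fI P (by rw [← hI]; exact hP) c h1 h2 h3

end
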